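/- Let h : [0,m] → ℝ^k be of bounded variation and let (Aₜ) be a sequence of k×k real matrices and A a fixed k×k matrix such that ε_T := sup_{r ∈ [0,m]} ‖T^{-1} ∑_{t=1}^{⌊rT⌋} (Aₜ − A)‖ → 0 as T → ∞, where ‖·‖ is the operator norm induced by the maximum norm. Then sup_{r ∈ [0,m]} ‖T^{-1} ∑_{t=1}^{⌊rT⌋} (Aₜ − A) h(t/T)‖ → 0 as T → ∞. -/

import Mathlib

open Matrix Finset Filter

/-- Operator norm of a matrix induced by the maximum norm on `Fin k → ℝ`
(the Pi sup norm). -/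
noncomputable def opNormMax {k : ℕ} (M : Matrix (Fin k) (Fin k) ℝ) : ℝ :=
  ⨆ v : {v : Fin k → ℝ // ‖v‖ ≤ 1}, ‖M.mulVec v.1‖

/-- Lemma A.5 (deterministic version): if `h` has bounded variation on `[0,m]` and
`sup_{r∈[0,m]} ‖T⁻¹∑_{t≤⌊rT⌋}(Aₜ−A)‖ → 0` in the max-norm operator norm, then
`sup_{r∈[0,m]} ‖T⁻¹∑_{t≤⌊rT⌋}(Aₜ−A)h(t/T)‖ → 0` as `T → ∞`. -/
lemma opNormMax_nonneg {k : ℕ} (M : Matrix (Fin k) (Fin k) ℝ) : 0 ≤ opNormMax M :=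
  Real.iSup_nonneg fun _ => norm_nonneg _

lemma opNormMax_bdd {k : ℕ} (M : Matrix (Fin k) (Fin k) ℝ) :
    BddAbove (Set.range fun v : {v : Fin k → ℝ // ‖v‖ ≤ 1} => ‖M.mulVec v.1‖) := by
  refine ⟨∑ i, ∑ j, |M i j|, ?_⟩
  rintro x ⟨⟨v, hv⟩, rfl⟩
  have hC : (0:ℝ) ≤ ∑ i, ∑ j, |M i j| := by positivity
  rw [pi_norm_le_iff_of_nonneg hC]
  intro i
  calc ‖M.mulVec v i‖ = |∑ j, M i j * v j| := by
        simp [Matrix.mulVec, dotProduct, Real.norm_eq_abs]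
    _ ≤ ∑ j, |M i j * v j| := Finset.abs_sum_le_sum_abs _ _
    _ ≤ ∑ j, |M i j| := by
        refine Finset.sum_le_sum fun j _ => ?_
        rw [abs_mul]
        have h1 : |v j| ≤ 1 := le_trans (norm_le_pi_norm v j) hv
        nlinarith [abs_nonneg (M i j), abs_nonneg (v j)]
    _ ≤ ∑ i, ∑ j, |M i j| :=
        Finset.single_le_sum (f := fun i => ∑ j, |M i j|)
          (fun i _ => by positivity) (Finset.mem_univ i)

lemma opNormMax_mulVec_le {k : ℕ} (M : Matrix (Fin k) (Fin k) ℝ) (v : Fin k → ℝ) :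
    ‖M.mulVec v‖ ≤ opNormMax M * ‖v‖ := by
  rcases eq_or_ne v 0 with rfl | hv
  · simp
  · have hv' : 0 < ‖v‖ := norm_pos_iff.mpr hv
    have hu : ‖(‖v‖⁻¹ • v : Fin k → ℝ)‖ ≤ 1 := by
      rw [norm_smul, norm_inv, norm_norm, inv_mul_cancel₀ hv'.ne']
    have h1 : ‖M.mulVec (‖v‖⁻¹ • v)‖ ≤ opNormMax M :=
      le_ciSup (opNormMax_bdd M) ⟨_, hu⟩
    have h2 : M.mulVec v = ‖v‖ • M.mulVec (‖v‖⁻¹ • v) := by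
      rw [Matrix.mulVec_smul, smul_smul, mul_inv_cancel₀ hv'.ne', one_smul]
    rw [h2, norm_smul, norm_norm, mul_comm]
    exact mul_le_mul_of_nonneg_right h1 hv'.le

lemma abel_mulVec {k : ℕ} (B : ℕ → Matrix (Fin k) (Fin k) ℝ) (w : ℕ → Fin k → ℝ) (N : ℕ) :
    ∑ t ∈ Finset.Icc 1 (N+1), (B t).mulVec (w t) =
      (∑ s ∈ Finset.Icc 1 (N+1), B s).mulVec (w (N+1))
        - ∑ t ∈ Finset.Icc 1 N, (∑ s ∈ Finset.Icc 1 t, B s).mulVec (w (t+1) - w t) := by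
  induction N with
  | zero => simp
  | succ n ih =>
    rw [Finset.sum_Icc_succ_top (by omega), Finset.sum_Icc_succ_top (by omega) B,
      Finset.sum_Icc_succ_top (by omega)
        (fun t => (∑ s ∈ Finset.Icc 1 t, B s).mulVec (w (t+1) - w t)), ih,
      Matrix.add_mulVec, Matrix.mulVec_sub]
    abel

lemma variation_sum_le {k : ℕ} (h : ℝ → Fin k → ℝ) (m : ℝ)
    (hBV : BoundedVariationOn h (Set.Icc 0 m))
    (T : ℕ) (hT : 0 < (T:ℝ)) (M : ℕ) (hM : ((M:ℝ)+1) ≤ m * T) :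
    ∑ t ∈ Finset.Icc 1 M, ‖h (((t:ℝ)+1)/T) - h ((t:ℝ)/T)‖
      ≤ (eVariationOn h (Set.Icc 0 m)).toReal := by
  set u : ℕ → ℝ := fun i => ((min (i+1) (M+1) : ℕ) : ℝ)/T with hu
  have humono : Monotone u := by
    intro a b hab
    have : (min (a+1) (M+1) : ℕ) ≤ min (b+1) (M+1) := by omega
    exact div_le_div_of_nonneg_right (by exact_mod_cast this) hT.le
  have hus : ∀ i, u i ∈ Set.Icc (0:ℝ) m := by
    intro i
    constructor
    · positivity
    · rw [div_le_iff₀ hT]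
      calc ((min (i+1) (M+1) : ℕ) : ℝ) ≤ ((M+1 : ℕ) : ℝ) := by
            exact_mod_cast Nat.min_le_right _ _
        _ ≤ m * T := by push_cast; linarith
  have hsum := eVariationOn.sum_le (f := h) (n := M) humono hus
  have hval : ∀ i ∈ Finset.range M,
      edist (h (u (i+1))) (h (u i)) = edist (h (((i:ℝ)+2)/T)) (h (((i:ℝ)+1)/T)) := by
    intro i hi
    rw [Finset.mem_range] at hi
    have h1 : min (i+1) (M+1) = i+1 := by omega
    have h2 : min (i+1+1) (M+1) = i+2 := by omega
    simp only [hu, h1, h2]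
    push_cast
    ring_nf
  rw [Finset.sum_congr rfl hval] at hsum
  have hrw : ∑ t ∈ Finset.Icc 1 M, ‖h (((t:ℝ)+1)/T) - h ((t:ℝ)/T)‖
      = ∑ i ∈ Finset.range M, ‖h (((i:ℝ)+2)/T) - h (((i:ℝ)+1)/T)‖ := by
    rw [show Finset.Icc 1 M = Finset.Ico 1 (M+1) by rfl, Finset.sum_Ico_eq_sum_range]
    simp only [Nat.add_sub_cancel]
    apply Finset.sum_congr rfl
    intro i _
    push_cast
    ring_nf
  rw [hrw]
  have : ∑ i ∈ Finset.range M, ‖h (((i:ℝ)+2)/T) - h (((i:ℝ)+1)/T)‖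
      = (∑ i ∈ Finset.range M, edist (h (((i:ℝ)+2)/T)) (h (((i:ℝ)+1)/T))).toReal := by
    rw [ENNReal.toReal_sum (fun i _ => edist_ne_top _ _)]
    apply Finset.sum_congr rfl
    intro i _
    rw [edist_dist, ENNReal.toReal_ofReal dist_nonneg, dist_eq_norm]
  rw [this]
  exact ENNReal.toReal_mono hBV hsum

theorem stmt17 (k : ℕ) (m : ℝ) (hm : 0 < m)
    (h : ℝ → Fin k → ℝ) (hBV : BoundedVariationOn h (Set.Icc 0 m))
    (A : ℕ → Matrix (Fin k) (Fin k) ℝ) (Alim : Matrix (Fin k) (Fin k) ℝ)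
    (hA : Tendsto (fun T : ℕ =>
        ⨆ r ∈ Set.Icc (0 : ℝ) m,
          opNormMax ((T : ℝ)⁻¹ • ∑ t ∈ Finset.Icc 1 ⌊r * T⌋₊, (A t - Alim)))
      atTop (nhds 0)) :
    Tendsto (fun T : ℕ =>
        ⨆ r ∈ Set.Icc (0 : ℝ) m,
          ‖(T : ℝ)⁻¹ • ∑ t ∈ Finset.Icc 1 ⌊r * T⌋₊,
              (A t - Alim).mulVec (h ((t : ℝ) / T))‖)
      atTop (nhds 0) := by
  set F : ℕ → ℝ := fun T =>
    ⨆ r ∈ Set.Icc (0 : ℝ) m,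
      opNormMax ((T : ℝ)⁻¹ • ∑ t ∈ Finset.Icc 1 ⌊r * T⌋₊, (A t - Alim)) with hF
  set V : ℝ := (eVariationOn h (Set.Icc 0 m)).toReal with hVdef
  have hV0 : 0 ≤ V := ENNReal.toReal_nonneg
  set C : ℝ := ‖h 0‖ + V with hCdef
  have hC0 : 0 ≤ C := by positivity
  set K : ℝ := C + V with hKdef
  have hK0 : 0 ≤ K := by positivity
  have hmem0 : (0:ℝ) ∈ Set.Icc 0 m := ⟨le_refl 0, hm.le⟩
  have hbound : ∀ x ∈ Set.Icc (0:ℝ) m, ‖h x‖ ≤ C := by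
    intro x hx
    have h1 : dist (h x) (h 0) ≤ V := by
      have := eVariationOn.edist_le h hx hmem0
      rw [edist_dist] at this
      calc dist (h x) (h 0) = (ENNReal.ofReal (dist (h x) (h 0))).toReal :=
            (ENNReal.toReal_ofReal dist_nonneg).symm
        _ ≤ V := ENNReal.toReal_mono hBV this
    have h2 : ‖h x‖ - ‖h 0‖ ≤ ‖h x - h 0‖ := norm_sub_norm_le _ _
    rw [← dist_eq_norm] at h2
    simp only [hCdef]; linarith
  have hF0 : ∀ T, 0 ≤ F T := fun T =>
    Real.iSup_nonneg fun r => Real.iSup_nonneg fun _ => opNormMax_nonneg _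
  -- main bound
  have hupper : ∀ T : ℕ, 1 ≤ T →
      (⨆ r ∈ Set.Icc (0 : ℝ) m,
          ‖(T : ℝ)⁻¹ • ∑ t ∈ Finset.Icc 1 ⌊r * T⌋₊,
              (A t - Alim).mulVec (h ((t : ℝ) / T))‖) ≤ F T * K := by
    intro T hT1
    have hT0 : (0:ℝ) < T := by exact_mod_cast hT1
    have hFK0 : 0 ≤ F T * K := mul_nonneg (hF0 T) hK0
    -- bddAbove of the F-family
    have hbdd : BddAbove (Set.range fun r : ℝ => ⨆ _ : r ∈ Set.Icc (0:ℝ) m,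
        opNormMax ((T:ℝ)⁻¹ • ∑ t ∈ Finset.Icc 1 ⌊r*T⌋₊, (A t - Alim))) := by
      have hfin : (insert (0:ℝ) ((fun n : ℕ =>
          opNormMax ((T:ℝ)⁻¹ • ∑ t ∈ Finset.Icc 1 n, (A t - Alim))) '' Set.Iic ⌊m*T⌋₊)).Finite :=
        (Set.Finite.image _ (Set.finite_Iic _)).insert 0
      refine hfin.bddAbove.mono ?_
      rintro x ⟨r, rfl⟩
      dsimp only
      by_cases hr : r ∈ Set.Icc (0:ℝ) m
      · rw [ciSup_pos hr]
        refine Set.mem_insert_of_mem _ ⟨⌊r*T⌋₊, ?_, rfl⟩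
        exact Nat.floor_mono (mul_le_mul_of_nonneg_right hr.2 hT0.le)
      · have : IsEmpty (r ∈ Set.Icc (0:ℝ) m) := ⟨hr⟩
        rw [Real.iSup_of_isEmpty]
        exact Set.mem_insert _ _
    -- key: partial-sum operator norms bounded by F T
    have hkey : ∀ n : ℕ, 1 ≤ n → (n:ℝ) ≤ m * T →
        opNormMax ((T:ℝ)⁻¹ • ∑ t ∈ Finset.Icc 1 n, (A t - Alim)) ≤ F T := by
      intro n hn hnm
      have hr : ((n:ℝ)/T) ∈ Set.Icc (0:ℝ) m :=
        ⟨div_nonneg (Nat.cast_nonneg n) (Nat.cast_nonneg T), by rw [div_le_iff₀ hT0]; exact hnm⟩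
      have hfloor : ⌊(n:ℝ)/T * T⌋₊ = n := by
        rw [div_mul_cancel₀ _ hT0.ne', Nat.floor_natCast]
      have hle := le_ciSup hbdd ((n:ℝ)/T)
      rw [ciSup_pos hr, hfloor] at hle
      exact hle
    refine Real.iSup_le (fun r => Real.iSup_le (fun hr => ?_) hFK0) hFK0
    -- fixed r ∈ [0,m]
    have hNm : ((⌊r*T⌋₊:ℕ):ℝ) ≤ m*T :=
      le_trans (Nat.floor_le (mul_nonneg hr.1 hT0.le)) (mul_le_mul_of_nonneg_right hr.2 hT0.le)
    rcases Nat.eq_zero_or_pos ⌊r*T⌋₊ with hN | hNpos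
    · rw [hN]; simpa using hFK0
    · obtain ⟨M, hM⟩ := Nat.exists_eq_succ_of_ne_zero hNpos.ne'
      rw [hM]
      rw [hM] at hNm
      have hNm' : ((M:ℝ)+1) ≤ m*T := by push_cast at hNm; linarith
      rw [abel_mulVec (fun t => A t - Alim) (fun t => h ((t:ℝ)/T)) M]
      rw [smul_sub]
      refine le_trans (norm_sub_le _ _) ?_
      -- first term
      have hX : ‖(T:ℝ)⁻¹ • (∑ s ∈ Finset.Icc 1 (M+1), (A s - Alim)).mulVec
          (h (((M+1:ℕ):ℝ)/T))‖ ≤ F T * C := by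
        rw [← smul_mulVec]
        refine le_trans (opNormMax_mulVec_le _ _) ?_
        refine mul_le_mul (hkey (M+1) (by omega) (by push_cast; linarith)) ?_
          (norm_nonneg _) (hF0 T)
        refine hbound _ ⟨div_nonneg (Nat.cast_nonneg _) (Nat.cast_nonneg T), ?_⟩
        rw [div_le_iff₀ hT0]; push_cast; linarith
      -- second term
      have hY : ‖(T:ℝ)⁻¹ • ∑ t ∈ Finset.Icc 1 M,
          (∑ s ∈ Finset.Icc 1 t, (A s - Alim)).mulVec
            (h (((t+1:ℕ):ℝ)/T) - h (((t:ℕ):ℝ)/T))‖ ≤ F T * V := by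
        rw [Finset.smul_sum]
        refine le_trans (norm_sum_le _ _) ?_
        have hterm : ∀ t ∈ Finset.Icc 1 M,
            ‖(T:ℝ)⁻¹ • (∑ s ∈ Finset.Icc 1 t, (A s - Alim)).mulVec
              (h (((t+1:ℕ):ℝ)/T) - h (((t:ℕ):ℝ)/T))‖
            ≤ F T * ‖h (((t:ℝ)+1)/T) - h ((t:ℝ)/T)‖ := by
          intro t ht
          rw [Finset.mem_Icc] at ht
          rw [← smul_mulVec]
          refine le_trans (opNormMax_mulVec_le _ _) ?_
          have : (((t+1:ℕ)):ℝ)/T = ((t:ℝ)+1)/T := by push_cast; ring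
          rw [this]
          have htm : (t:ℝ) ≤ m * T := by
            have h9 : (t:ℝ) ≤ (M:ℝ)+1 := by exact_mod_cast Nat.le_succ_of_le ht.2
            linarith
          exact mul_le_mul_of_nonneg_right (hkey t ht.1 htm) (norm_nonneg _)
        refine le_trans (Finset.sum_le_sum hterm) ?_
        rw [← Finset.mul_sum]
        exact mul_le_mul_of_nonneg_left
          (variation_sum_le h m hBV T hT0 M hNm') (hF0 T)
      calc _ ≤ F T * C + F T * V := add_le_add hX hY
        _ = F T * K := by rw [hKdef]; ring
  -- squeeze
  have hnn : ∀ T : ℕ, 0 ≤ ⨆ r ∈ Set.Icc (0 : ℝ) m,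
      ‖(T : ℝ)⁻¹ • ∑ t ∈ Finset.Icc 1 ⌊r * T⌋₊,
          (A t - Alim).mulVec (h ((t : ℝ) / T))‖ := fun T =>
    Real.iSup_nonneg fun r => Real.iSup_nonneg fun _ => norm_nonneg _
  have hFK : Tendsto (fun T => F T * K) atTop (nhds 0) := by
    have := hA.mul_const K
    rwa [zero_mul] at this
  refine tendsto_of_tendsto_of_tendsto_of_le_of_le' tendsto_const_nhds hFK
    (Eventually.of_forall hnn) ?_
  filter_upwards [eventually_ge_atTop 1] with T hT using hupper T hT
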